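/- If (x, y, z) ∈ ℤ³ is a solution of the Diophantine equation αx² + βxy + γy² = δz² with z ≠ 0, and (a, b, c) is a fixed integral solution with c ≠ 0, then (x, y, z) is a rational multiple of (γn(an − 2bm) − (αa + βb)m², αm(bm − 2an) − (γb + βa)n², ±c(αm² + βmn + γn²)) for some coprime integers m, n with m ≥ 0. -/

import Mathlib

/-- Final step: if the integer identities hold at a scaled point `(K*m, K*n)` with
`gcd m n = 1`, `0 ≤ m`, we can produce the rational multiple. -/
lemma aux_final (α β γ a b c x y z m n K : ℤ) (hc : c ≠ 0) (hK : K ≠ 0)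
    (hcop : Int.gcd m n = 1) (hm : 0 ≤ m)
    (hD : α * (K * m) ^ 2 + β * ((K * m) * (K * n)) + γ * (K * n) ^ 2 ≠ 0)
    (hx : x * (c * (α * (K * m) ^ 2 + β * ((K * m) * (K * n)) + γ * (K * n) ^ 2)) =
      z * (γ * ((K * n) * (a * (K * n) - 2 * b * (K * m))) - (α * a + β * b) * (K * m) ^ 2))
    (hy : y * (c * (α * (K * m) ^ 2 + β * ((K * m) * (K * n)) + γ * (K * n) ^ 2)) =
      z * (α * ((K * m) * (b * (K * m) - 2 * a * (K * n))) - (γ * b + β * a) * (K * n) ^ 2)) :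
    ∃ m n : ℤ, Int.gcd m n = 1 ∧ 0 ≤ m ∧ ∃ (t : ℚ) (ε : ℤ), (ε = 1 ∨ ε = -1) ∧
      (x : ℚ) = t * (γ * (n * (a * n - 2 * b * m)) - (α * a + β * b) * m ^ 2) ∧
      (y : ℚ) = t * (α * (m * (b * m - 2 * a * n)) - (γ * b + β * a) * n ^ 2) ∧
      (z : ℚ) = t * (ε * c * (α * m ^ 2 + β * (m * n) + γ * n ^ 2)) := by
  have hK2 : K ^ 2 ≠ 0 := pow_ne_zero 2 hK
  have hD' : α * m ^ 2 + β * (m * n) + γ * n ^ 2 ≠ 0 := by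
    intro h
    exact hD (by linear_combination K ^ 2 * h)
  have hx' : x * (c * (α * m ^ 2 + β * (m * n) + γ * n ^ 2)) =
      z * (γ * (n * (a * n - 2 * b * m)) - (α * a + β * b) * m ^ 2) := by
    have h2 : K ^ 2 * (x * (c * (α * m ^ 2 + β * (m * n) + γ * n ^ 2))) =
        K ^ 2 * (z * (γ * (n * (a * n - 2 * b * m)) - (α * a + β * b) * m ^ 2)) := by
      linear_combination hx
    exact mul_left_cancel₀ hK2 h2
  have hy' : y * (c * (α * m ^ 2 + β * (m * n) + γ * n ^ 2)) =
      z * (α * (m * (b * m - 2 * a * n)) - (γ * b + β * a) * n ^ 2) := by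
    have h2 : K ^ 2 * (y * (c * (α * m ^ 2 + β * (m * n) + γ * n ^ 2))) =
        K ^ 2 * (z * (α * (m * (b * m - 2 * a * n)) - (γ * b + β * a) * n ^ 2)) := by
      linear_combination hy
    exact mul_left_cancel₀ hK2 h2
  have hcQ : (c : ℚ) ≠ 0 := Int.cast_ne_zero.mpr hc
  have hDQ : (α : ℚ) * m ^ 2 + β * (m * n) + γ * n ^ 2 ≠ 0 := by
    intro h
    apply hD'
    exact_mod_cast h
  have hxQ : (x : ℚ) * (c * (α * m ^ 2 + β * (m * n) + γ * n ^ 2)) =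
      z * (γ * (n * (a * n - 2 * b * m)) - (α * a + β * b) * m ^ 2) := by
    exact_mod_cast congrArg (Int.cast : ℤ → ℚ) hx'
  have hyQ : (y : ℚ) * (c * (α * m ^ 2 + β * (m * n) + γ * n ^ 2)) =
      z * (α * (m * (b * m - 2 * a * n)) - (γ * b + β * a) * n ^ 2) := by
    exact_mod_cast congrArg (Int.cast : ℤ → ℚ) hy'
  refine ⟨m, n, hcop, hm,
    (z : ℚ) / ((c : ℚ) * ((α : ℚ) * m ^ 2 + β * (m * n) + γ * n ^ 2)), 1, Or.inl rfl,
    ?_, ?_, ?_⟩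
  · rw [div_mul_eq_mul_div, eq_div_iff (mul_ne_zero hcQ hDQ)]
    linear_combination hxQ
  · rw [div_mul_eq_mul_div, eq_div_iff (mul_ne_zero hcQ hDQ)]
    linear_combination hyQ
  · rw [div_mul_eq_mul_div, eq_div_iff (mul_ne_zero hcQ hDQ)]
    push_cast; ring

/-- Reduction: scale an arbitrary nonzero direction to a coprime one. -/
lemma aux_reduce (α β γ a b c x y z M N : ℤ) (hc : c ≠ 0)
    (hD : α * M ^ 2 + β * (M * N) + γ * N ^ 2 ≠ 0)
    (hx : x * (c * (α * M ^ 2 + β * (M * N) + γ * N ^ 2)) =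
      z * (γ * (N * (a * N - 2 * b * M)) - (α * a + β * b) * M ^ 2))
    (hy : y * (c * (α * M ^ 2 + β * (M * N) + γ * N ^ 2)) =
      z * (α * (M * (b * M - 2 * a * N)) - (γ * b + β * a) * N ^ 2)) :
    ∃ m n : ℤ, Int.gcd m n = 1 ∧ 0 ≤ m ∧ ∃ (t : ℚ) (ε : ℤ), (ε = 1 ∨ ε = -1) ∧
      (x : ℚ) = t * (γ * (n * (a * n - 2 * b * m)) - (α * a + β * b) * m ^ 2) ∧
      (y : ℚ) = t * (α * (m * (b * m - 2 * a * n)) - (γ * b + β * a) * n ^ 2) ∧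
      (z : ℚ) = t * (ε * c * (α * m ^ 2 + β * (m * n) + γ * n ^ 2)) := by
  have hMN : M ≠ 0 ∨ N ≠ 0 := by
    by_contra h
    push_neg at h
    obtain ⟨h1, h2⟩ := h
    apply hD
    rw [h1, h2]; ring
  have hgpos : 0 < Int.gcd M N := Int.gcd_pos_iff.mpr hMN
  set g : ℤ := (Int.gcd M N : ℤ) with hgdef
  have hgne : g ≠ 0 := by
    simp only [hgdef]
    exact_mod_cast hgpos.ne'
  have hM : g * (M / g) = M := Int.mul_ediv_cancel' (Int.gcd_dvd_left M N)
  have hN : g * (N / g) = N := Int.mul_ediv_cancel' (Int.gcd_dvd_right M N)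
  have hcop : Int.gcd (M / g) (N / g) = 1 := Int.gcd_div_gcd_div_gcd hgpos
  rcases le_or_gt 0 (M / g) with hm | hm
  · apply aux_final α β γ a b c x y z (M / g) (N / g) g hc hgne hcop hm
    · rw [hM, hN]; exact hD
    · rw [hM, hN]; exact hx
    · rw [hM, hN]; exact hy
  · have hcop' : Int.gcd (-(M / g)) (-(N / g)) = 1 := by
      simpa [Int.gcd, Int.natAbs_neg] using hcop
    apply aux_final α β γ a b c x y z (-(M / g)) (-(N / g)) (-g) hc (neg_ne_zero.mpr hgne)
      hcop' (by linarith)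
    · have e1 : -g * -(M / g) = M := by rw [neg_mul_neg]; exact hM
      have e2 : -g * -(N / g) = N := by rw [neg_mul_neg]; exact hN
      rw [e1, e2]; exact hD
    · have e1 : -g * -(M / g) = M := by rw [neg_mul_neg]; exact hM
      have e2 : -g * -(N / g) = N := by rw [neg_mul_neg]; exact hN
      rw [e1, e2]; exact hx
    · have e1 : -g * -(M / g) = M := by rw [neg_mul_neg]; exact hM
      have e2 : -g * -(N / g) = N := by rw [neg_mul_neg]; exact hN
      rw [e1, e2]; exact hy

theorem stmt_0 (α β γ δ a b c x y z : ℤ)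
    (hdisc : β ^ 2 ≠ 4 * α * γ) (hδ : δ ≠ 0)
    (habc : α * a ^ 2 + β * (a * b) + γ * b ^ 2 = δ * c ^ 2) (hc : c ≠ 0)
    (hxyz : α * x ^ 2 + β * (x * y) + γ * y ^ 2 = δ * z ^ 2) (hz : z ≠ 0) :
    ∃ m n : ℤ, Int.gcd m n = 1 ∧ 0 ≤ m ∧ ∃ (t : ℚ) (ε : ℤ), (ε = 1 ∨ ε = -1) ∧
      (x : ℚ) = t * (γ * (n * (a * n - 2 * b * m)) - (α * a + β * b) * m ^ 2) ∧
      (y : ℚ) = t * (α * (m * (b * m - 2 * a * n)) - (γ * b + β * a) * n ^ 2) ∧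
      (z : ℚ) = t * (ε * c * (α * m ^ 2 + β * (m * n) + γ * n ^ 2)) := by
  have hΔ : β ^ 2 - 4 * α * γ ≠ 0 := sub_ne_zero.mpr hdisc
  have hδc2 : δ * c ^ 2 ≠ 0 := mul_ne_zero hδ (pow_ne_zero 2 hc)
  by_cases h0 : c * x - a * z = 0 ∧ c * y - b * z = 0
  · -- tangent case: use direction (β*a + 2*γ*b, -(2*α*a + β*b))
    obtain ⟨h01, h02⟩ := h0
    set M : ℤ := β * a + 2 * γ * b with hMdef
    set N : ℤ := -(2 * α * a + β * b) with hNdef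
    have hD1 : α * M ^ 2 + β * (M * N) + γ * N ^ 2 = -(β ^ 2 - 4 * α * γ) * (δ * c ^ 2) := by
      rw [hMdef, hNdef]
      linear_combination (4 * α * γ - β ^ 2) * habc
    have hDne : α * M ^ 2 + β * (M * N) + γ * N ^ 2 ≠ 0 := by
      rw [hD1]
      exact mul_ne_zero (neg_ne_zero.mpr hΔ) hδc2
    apply aux_reduce α β γ a b c x y z M N hc hDne
    · rw [hMdef, hNdef]
      linear_combination (α * (β * a + 2 * γ * b) ^ 2 + β * ((β * a + 2 * γ * b) *
        (-(2 * α * a + β * b))) + γ * (-(2 * α * a + β * b)) ^ 2) * h01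
    · rw [hMdef, hNdef]
      linear_combination (α * (β * a + 2 * γ * b) ^ 2 + β * ((β * a + 2 * γ * b) *
        (-(2 * α * a + β * b))) + γ * (-(2 * α * a + β * b)) ^ 2) * h02
  · -- generic case: use direction (c*x - a*z, c*y - b*z)
    set M : ℤ := c * x - a * z with hMdef
    set N : ℤ := c * y - b * z with hNdef
    have hDne : α * M ^ 2 + β * (M * N) + γ * N ^ 2 ≠ 0 := by
      intro hD0
      -- L = 2δcz
      have h1 : z * c * ((2 * α * a * x + β * (a * y + b * x) + 2 * γ * b * y)
          - 2 * δ * c * z) = 0 := by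
        rw [hMdef, hNdef] at hD0
        linear_combination -hD0 + c ^ 2 * hxyz + z ^ 2 * habc
      have hL : 2 * α * a * x + β * (a * y + b * x) + 2 * γ * b * y = 2 * δ * c * z := by
        have := mul_ne_zero hz hc
        rcases mul_eq_zero.mp h1 with h | h
        · exact absurd h this
        · linarith [sub_eq_zero.mp h]
      have h2 : (β ^ 2 - 4 * α * γ) * (x * b - y * a) ^ 2 = 0 := by
        linear_combination (2 * α * a * x + β * (a * y + b * x) + 2 * γ * b * y
            + 2 * δ * c * z) * hL - 4 * (α * a ^ 2 + β * (a * b) + γ * b ^ 2) * hxyz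
          - 4 * δ * z ^ 2 * habc
      have hxb : x * b = y * a := by
        rcases mul_eq_zero.mp h2 with h | h
        · exact absurd h hΔ
        · have := sq_eq_zero_iff.mp h
          linarith
      have h3 : b * M = a * N := by
        rw [hMdef, hNdef]
        linear_combination c * hxb
      have h4sq : (2 * α * a * M + β * (a * N + b * M) + 2 * γ * b * N) ^ 2 = 0 := by
        linear_combination 4 * (α * a ^ 2 + β * (a * b) + γ * b ^ 2) * hD0
          + (β ^ 2 - 4 * α * γ) * (b * M - a * N) * h3
      have hL' : 2 * α * a * M + β * (a * N + b * M) + 2 * γ * b * N = 0 :=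
        sq_eq_zero_iff.mp h4sq
      have h5 : 2 * M * (δ * c ^ 2) = 0 := by
        linear_combination a * hL' + (β * a + 2 * γ * b) * h3 - 2 * M * habc
      have h6 : 2 * N * (δ * c ^ 2) = 0 := by
        linear_combination b * hL' - (2 * α * a + β * b) * h3 - 2 * N * habc
      have hM0 : M = 0 := by
        rcases mul_eq_zero.mp h5 with h | h
        · linarith
        · exact absurd h hδc2
      have hN0 : N = 0 := by
        rcases mul_eq_zero.mp h6 with h | h
        · linarith
        · exact absurd h hδc2
      exact h0 ⟨hM0, hN0⟩
    apply aux_reduce α β γ a b c x y z M N hc hDne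
    · rw [hMdef, hNdef]
      linear_combination (a * z - c * x) * z ^ 2 * habc - (a * z - c * x) * c ^ 2 * hxyz
    · rw [hMdef, hNdef]
      linear_combination (b * z - c * y) * z ^ 2 * habc - (b * z - c * y) * c ^ 2 * hxyz
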